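/- Let A ≤ B in K_α, (B,C) an essential minimal pair with γ = -δ(C/B), and k the nonnegative integer with kγ ≤ δ(B/A) < (k+1)γ. Let D be the free join of k copies of C over B. Then D ∈ K_α, A ≤ D, and 0 ≤ δ(D/A) < γ. Moreover, if (B,G) is any minimal pair with |G| < |C|, then G does not embed into D over B. -/

import Mathlib

open Finset

/-- The number of subsets of `A` on which the relation `E` holds. -/
noncomputable def edgeCount {L V : Type} (rel : L → Finset V → Prop) (E : L)
    (A : Finset V) : ℕ :=
  {e : Finset V | e ⊆ A ∧ rel E e}.ncard

/-- The rank function `δ(A) = |A| - ∑_E α_E · N_E(A)`. -/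
noncomputable def delta {L V : Type} [Fintype L] (α : L → ℝ)
    (rel : L → Finset V → Prop) (A : Finset V) : ℝ :=
  (A.card : ℝ) - ∑ E, α E * (edgeCount rel E A : ℝ)

/-- `A` is strong in `B`: `A ⊆ B` and `δ(A) ≤ δ(A')` for all `A ⊆ A' ⊆ B`. -/
def strong {L V : Type} [Fintype L] (α : L → ℝ) (rel : L → Finset V → Prop)
    (A B : Finset V) : Prop :=
  A ⊆ B ∧ ∀ A' : Finset V, A ⊆ A' → A' ⊆ B → delta α rel A ≤ delta α rel A'

/-- Membership in `K_α`: all substructures have nonnegative rank. -/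
def inK {L V : Type} [Fintype L] (α : L → ℝ) (rel : L → Finset V → Prop)
    (A : Finset V) : Prop :=
  ∀ A' ⊆ A, 0 ≤ delta α rel A'

/-- `(A, B)` is a minimal pair: `A ≤ C` for all `A ⊆ C ⊊ B` but `A ≰ B`. -/
def minPair {L V : Type} [Fintype L] (α : L → ℝ) (rel : L → Finset V → Prop)
    (A B : Finset V) : Prop :=
  A ⊆ B ∧ (∀ C : Finset V, A ⊆ C → C ⊂ B → strong α rel A C) ∧ ¬ strong α rel A B

/-- `(B, C)` is an essential minimal pair: a minimal pair such that additionally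
`δ(C'/C' ∩ B) ≥ 0` for every proper substructure `C' ⊊ C`. -/
def essMinPair {L V : Type} [Fintype L] [DecidableEq V] (α : L → ℝ)
    (rel : L → Finset V → Prop) (B C : Finset V) : Prop :=
  minPair α rel B C ∧
    ∀ C' : Finset V, C' ⊂ C → 0 ≤ delta α rel C' - delta α rel (C' ∩ B)

/-- `C'` is an isomorphic copy of `C` over `B`: the image of `C` under an
injective map fixing `B` pointwise and preserving all relations on subsets of `C`. -/
def copyOver {L V : Type} [DecidableEq V] (rel : L → Finset V → Prop)
    (B C C' : Finset V) : Prop :=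
  ∃ f : V → V, Set.InjOn f ↑C ∧ (∀ b ∈ B, f b = b) ∧ C.image f = C' ∧
    ∀ E (e : Finset V), e ⊆ C → (rel E e ↔ rel E (e.image f))

/-- `G` embeds into `D` over `B`: there is an injective relation-preserving map
from `G` into `D` fixing `B` pointwise. -/
def embedsOver {L V : Type} [DecidableEq V] (rel : L → Finset V → Prop)
    (B G D : Finset V) : Prop :=
  ∃ f : V → V, Set.InjOn f ↑G ∧ (∀ b ∈ B, f b = b) ∧ G.image f ⊆ D ∧
    ∀ E (e : Finset V), e ⊆ G → (rel E e ↔ rel E (e.image f))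

/-- Let `A ≤ B` in `K_α`, `(B, C₀)` an essential minimal pair with `γ = -δ(C₀/B)`,
and `k` the nonnegative integer with `kγ ≤ δ(B/A) < (k+1)γ`. If `D` is the free
join of `k` copies of `C₀` over `B`, then `D ∈ K_α`, `A ≤ D`, `0 ≤ δ(D/A) < γ`,
and no minimal pair `(B, G)` with `|G| < |C₀|` embeds into `D` over `B`. -/
lemma edgeCount_eq {L V : Type} (rel : L → Finset V → Prop) (E : L) (A : Finset V)
    [DecidablePred (rel E)] :
    edgeCount rel E A = (A.powerset.filter (fun e => rel E e)).card := by
  rw [edgeCount, ← Set.ncard_coe_finset]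
  congr 1
  ext e
  simp [Finset.mem_powerset]

lemma edgeCount_image {L V : Type} [DecidableEq V] (rel : L → Finset V → Prop)
    (f : V → V) (S Y : Finset V) (hinj : Set.InjOn f ↑S)
    (hrel : ∀ E (e : Finset V), e ⊆ S → (rel E e ↔ rel E (e.image f)))
    (hYS : Y ⊆ S) (E : L) :
    edgeCount rel E (Y.image f) = edgeCount rel E Y := by
  classical
  rw [edgeCount_eq, edgeCount_eq]
  have key : ∀ e' : Finset V, e' ⊆ Y.image f →
      (Y.filter (fun x => f x ∈ e')).image f = e' := by
    intro e' he'
    ext y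
    simp only [Finset.mem_image, Finset.mem_filter]
    constructor
    · rintro ⟨x, ⟨hxY, hfx⟩, rfl⟩; exact hfx
    · intro hy
      obtain ⟨x, hxY, rfl⟩ := Finset.mem_image.mp (he' hy)
      exact ⟨x, ⟨hxY, hy⟩, rfl⟩
  have hsub : ∀ e₁ e₂ : Finset V, e₁ ⊆ Y → e₂ ⊆ Y → e₁.image f ⊆ e₂.image f → e₁ ⊆ e₂ := by
    intro e₁ e₂ h₁ h₂ h x hx
    obtain ⟨x', hx', hfx⟩ := Finset.mem_image.mp (h (Finset.mem_image_of_mem f hx))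
    rwa [hinj (hYS (h₂ hx')) (hYS (h₁ hx)) hfx] at hx'
  apply le_antisymm
  · -- edges of image Y ≤ edges of Y, via preimage map
    apply Finset.card_le_card_of_injOn (fun e' => Y.filter (fun x => f x ∈ e'))
    · intro e' he'
      rw [Finset.mem_coe, Finset.mem_filter, Finset.mem_powerset] at he' ⊢
      refine ⟨Finset.filter_subset _ _, ?_⟩
      rw [hrel E _ ((Finset.filter_subset _ _).trans hYS), key e' he'.1]
      exact he'.2
    · intro e₁ h₁ e₂ h₂ h
      rw [Finset.mem_coe, Finset.mem_filter, Finset.mem_powerset] at h₁ h₂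
      rw [← key e₁ h₁.1, ← key e₂ h₂.1]
      exact congrArg (Finset.image f) h
  · -- edges of Y ≤ edges of image Y, via image map
    apply Finset.card_le_card_of_injOn (fun e => e.image f)
    · intro e he
      rw [Finset.mem_coe, Finset.mem_filter, Finset.mem_powerset] at he ⊢
      exact ⟨Finset.image_subset_image he.1, (hrel E e (he.1.trans hYS)).mp he.2⟩
    · intro e₁ h₁ e₂ h₂ h
      rw [Finset.mem_coe, Finset.mem_filter, Finset.mem_powerset] at h₁ h₂
      exact subset_antisymm (hsub _ _ h₁.1 h₂.1 h.le) (hsub _ _ h₂.1 h₁.1 h.ge)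

lemma delta_image {L V : Type} [Fintype L] [DecidableEq V] (α : L → ℝ)
    (rel : L → Finset V → Prop) (f : V → V) (S Y : Finset V)
    (hinj : Set.InjOn f ↑S)
    (hrel : ∀ E (e : Finset V), e ⊆ S → (rel E e ↔ rel E (e.image f)))
    (hYS : Y ⊆ S) :
    delta α rel (Y.image f) = delta α rel Y := by
  unfold delta
  rw [Finset.card_image_of_injOn (hinj.mono (Finset.coe_subset.mpr hYS))]
  congr 1
  exact Finset.sum_congr rfl fun E _ => by
    rw [edgeCount_image rel f S Y hinj hrel hYS E]

lemma delta_decomp {L V : Type} [Fintype L] [DecidableEq V] (α : L → ℝ)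
    (rel : L → Finset V → Prop) {k : ℕ} (B : Finset V) (C : Fin k → Finset V)
    (hBC : ∀ i, B ⊆ C i) (hdisj : ∀ i j, i ≠ j → C i ∩ C j = B)
    (X : Finset V) (hX : X ⊆ B ∪ Finset.univ.biUnion C)
    (hXfree : ∀ E (e : Finset V), rel E e → e ⊆ X → (e ⊆ B ∨ ∃ i, e ⊆ C i)) :
    delta α rel X = delta α rel (X ∩ B) +
      ∑ i, (delta α rel (X ∩ C i) - delta α rel (X ∩ B)) := by
  classical
  have hsub : ∀ i, X ∩ B ⊆ X ∩ C i := fun i =>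
    Finset.inter_subset_inter (le_refl X) (hBC i)
  -- card identity
  have hcard : (X.card : ℝ) = ((X ∩ B).card : ℝ) +
      ∑ i, (((X ∩ C i).card : ℝ) - ((X ∩ B).card : ℝ)) := by
    have h1 : X \ B = Finset.univ.biUnion (fun i => (X ∩ C i) \ B) := by
      ext x
      simp only [Finset.mem_sdiff, Finset.mem_biUnion, Finset.mem_inter, Finset.mem_univ,
        true_and]
      constructor
      · rintro ⟨hxX, hxB⟩
        rcases Finset.mem_union.mp (hX hxX) with h | h
        · exact absurd h hxB
        · obtain ⟨i, _, hi⟩ := Finset.mem_biUnion.mp h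
          exact ⟨i, ⟨⟨hxX, hi⟩, hxB⟩⟩
      · rintro ⟨i, ⟨hxX, _⟩, hxB⟩; exact ⟨hxX, hxB⟩
    have h2 : (X \ B).card = ∑ i, ((X ∩ C i) \ B).card := by
      rw [h1]
      apply Finset.card_biUnion
      intro i _ j _ hij
      apply Finset.disjoint_left.mpr
      intro e hei hej
      have h3 := Finset.mem_sdiff.mp hei
      have h4 := Finset.mem_sdiff.mp hej
      refine h3.2 ?_
      have : e ∈ C i ∩ C j := Finset.mem_inter.mpr
        ⟨(Finset.mem_inter.mp h3.1).2, (Finset.mem_inter.mp h4.1).2⟩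
      rwa [hdisj i j hij] at this
    have h5 : ∀ i, (X ∩ C i) \ (X ∩ B) = (X ∩ C i) \ B := by
      intro i; ext x
      simp only [Finset.mem_sdiff, Finset.mem_inter, not_and]
      tauto
    have h6 : ∀ i, ((X ∩ C i).card : ℝ) - ((X ∩ B).card : ℝ) = (((X ∩ C i) \ B).card : ℝ) := by
      intro i
      have h7 := Finset.card_sdiff_add_card_eq_card (hsub i)
      rw [h5 i] at h7
      have := congrArg (Nat.cast (R := ℝ)) h7
      push_cast at this
      linarith
    rw [Finset.sum_congr rfl fun i _ => h6 i]
    have h8 : X.card = (X ∩ B).card + ∑ i, ((X ∩ C i) \ B).card := by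
      rw [← h2, Finset.card_inter_add_card_sdiff]
    rw [h8]
    push_cast
    ring
  -- edge identity
  have hedge : ∀ E, (edgeCount rel E X : ℝ) = (edgeCount rel E (X ∩ B) : ℝ) +
      ∑ i, ((edgeCount rel E (X ∩ C i) : ℝ) - (edgeCount rel E (X ∩ B) : ℝ)) := by
    intro E
    set sB : Finset (Finset V) := (X ∩ B).powerset.filter (fun e => rel E e) with hsB
    set t : Fin k → Finset (Finset V) :=
      fun i => (X ∩ C i).powerset.filter (fun e => rel E e ∧ ¬ e ⊆ B) with ht
    have hsplit : ∀ i, (X ∩ C i).powerset.filter (fun e => rel E e) = sB ∪ t i := by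
      intro i; ext e
      simp only [hsB, ht, Finset.mem_union, Finset.mem_filter, Finset.mem_powerset,
        Finset.subset_inter_iff]
      constructor
      · rintro ⟨⟨heX, heC⟩, hr⟩
        by_cases hb : e ⊆ B
        · exact Or.inl ⟨⟨heX, hb⟩, hr⟩
        · exact Or.inr ⟨⟨heX, heC⟩, hr, hb⟩
      · rintro (⟨⟨heX, hb⟩, hr⟩ | ⟨⟨heX, heC⟩, hr, hb⟩)
        · exact ⟨⟨heX, hb.trans (hBC i)⟩, hr⟩
        · exact ⟨⟨heX, heC⟩, hr⟩
    have hdisjBt : ∀ i, Disjoint sB (t i) := by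
      intro i
      apply Finset.disjoint_left.mpr
      intro e he het
      rw [hsB, Finset.mem_filter, Finset.mem_powerset] at he
      rw [ht, Finset.mem_filter] at het
      exact het.2.2 (he.1.trans Finset.inter_subset_right)
    have htt : ∀ i j, i ≠ j → Disjoint (t i) (t j) := by
      intro i j hij
      apply Finset.disjoint_left.mpr
      intro e hei hej
      rw [ht, Finset.mem_filter, Finset.mem_powerset] at hei hej
      refine hei.2.2 ?_
      have : e ⊆ C i ∩ C j := Finset.subset_inter
        (hei.1.trans Finset.inter_subset_right) (hej.1.trans Finset.inter_subset_right)
      rwa [hdisj i j hij] at this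
    have hglob : X.powerset.filter (fun e => rel E e) = sB ∪ Finset.univ.biUnion t := by
      ext e
      simp only [hsB, ht, Finset.mem_union, Finset.mem_filter, Finset.mem_powerset,
        Finset.mem_biUnion, Finset.mem_univ, true_and, Finset.subset_inter_iff]
      constructor
      · rintro ⟨heX, hr⟩
        by_cases hb : e ⊆ B
        · exact Or.inl ⟨⟨heX, hb⟩, hr⟩
        · rcases hXfree E e hr heX with h | ⟨i, h⟩
          · exact absurd h hb
          · exact Or.inr ⟨i, ⟨heX, h⟩, hr, hb⟩
      · rintro (⟨⟨heX, _⟩, hr⟩ | ⟨i, ⟨heX, _⟩, hr, _⟩)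
        · exact ⟨heX, hr⟩
        · exact ⟨heX, hr⟩
    have hglobcard : (X.powerset.filter (fun e => rel E e)).card
        = sB.card + ∑ i, (t i).card := by
      rw [hglob, Finset.card_union_of_disjoint, Finset.card_biUnion]
      · intro i _ j _ hij; exact htt i j hij
      · exact (Finset.disjoint_biUnion_right _ _ _).mpr fun i _ => hdisjBt i
    have hpiece : ∀ i, (edgeCount rel E (X ∩ C i) : ℝ) - (edgeCount rel E (X ∩ B) : ℝ)
        = ((t i).card : ℝ) := by
      intro i
      rw [edgeCount_eq, edgeCount_eq, hsplit i,
        Finset.card_union_of_disjoint (hdisjBt i)]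
      push_cast
      ring
    rw [Finset.sum_congr rfl fun i _ => hpiece i, edgeCount_eq, edgeCount_eq, hglobcard]
    push_cast
    rfl
  -- assemble
  have hs : ∑ E : L, α E * (edgeCount rel E X : ℝ)
      = (∑ E : L, α E * (edgeCount rel E (X ∩ B) : ℝ))
        + ∑ i, ((∑ E : L, α E * (edgeCount rel E (X ∩ C i) : ℝ))
          - ∑ E : L, α E * (edgeCount rel E (X ∩ B) : ℝ)) := by
    rw [Finset.sum_congr rfl (fun E (_ : E ∈ Finset.univ) => by
      rw [hedge E, mul_add, Finset.mul_sum]), Finset.sum_add_distrib, Finset.sum_comm]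
    congr 1
    refine Finset.sum_congr rfl fun i _ => ?_
    simp only [mul_sub, Finset.sum_sub_distrib]
  have final : ∀ (a b : ℝ) (u v : Fin k → ℝ),
      (a + ∑ i, u i) - (b + ∑ i, v i) = (a - b) + ∑ i, (u i - v i) := by
    intro a b u v; rw [Finset.sum_sub_distrib]; ring
  unfold delta
  rw [hcard, hs, final]
  congr 1
  refine Finset.sum_congr rfl fun i _ => ?_
  ring

lemma minPair_lt {L V : Type} [Fintype L] (α : L → ℝ) (rel : L → Finset V → Prop)
    (A B : Finset V) (h : minPair α rel A B) : delta α rel B < delta α rel A := by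
  obtain ⟨hAB, hmin, hns⟩ := h
  by_contra hc
  push_neg at hc
  apply hns
  refine ⟨hAB, fun Y hAY hYB => ?_⟩
  by_cases hYB' : Y = B
  · exact hYB' ▸ hc
  · exact ((hmin Y hAY (Finset.ssubset_iff_subset_ne.mpr ⟨hYB, hYB'⟩)).2 Y hAY le_rfl)

lemma copy_facts {L V : Type} [Fintype L] [DecidableEq V] (α : L → ℝ)
    (rel : L → Finset V → Prop) (B C₀ Ci : Finset V)
    (hmp : essMinPair α rel B C₀) (h : copyOver rel B C₀ Ci) :
    B ⊆ Ci ∧ Ci.card = C₀.card ∧ delta α rel Ci = delta α rel C₀ ∧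
      ∀ Y : Finset V, Y ⊆ Ci → Y ≠ Ci →
        0 ≤ delta α rel Y - delta α rel (Y ∩ B) := by
  classical
  obtain ⟨f, hinj, hfix, himg, hrel⟩ := h
  have hBC₀ : B ⊆ C₀ := hmp.1.1
  have hBCi : B ⊆ Ci := by
    intro b hb
    rw [← himg, ← hfix b hb]
    exact Finset.mem_image_of_mem f (hBC₀ hb)
  refine ⟨hBCi, ?_, ?_, ?_⟩
  · rw [← himg, Finset.card_image_of_injOn hinj]
  · rw [← himg]
    exact delta_image α rel f C₀ C₀ hinj hrel le_rfl
  · intro Y hYCi hYne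
    set Y₀ : Finset V := C₀.filter (fun x => f x ∈ Y) with hY₀
    have hY₀C : Y₀ ⊆ C₀ := Finset.filter_subset _ _
    have himgY : Y₀.image f = Y := by
      ext y
      simp only [hY₀, Finset.mem_image, Finset.mem_filter]
      constructor
      · rintro ⟨x, ⟨_, hfx⟩, rfl⟩; exact hfx
      · intro hy
        have : y ∈ C₀.image f := himg ▸ hYCi hy
        obtain ⟨x, hx, rfl⟩ := Finset.mem_image.mp this
        exact ⟨x, ⟨hx, hy⟩, rfl⟩
    have hδY : delta α rel Y = delta α rel Y₀ := by
      rw [← himgY]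
      exact delta_image α rel f C₀ Y₀ hinj hrel hY₀C
    have hYB : Y ∩ B = Y₀ ∩ B := by
      ext x
      simp only [Finset.mem_inter, hY₀, Finset.mem_filter]
      constructor
      · rintro ⟨hxY, hxB⟩
        exact ⟨⟨hBC₀ hxB, by rw [hfix x hxB]; exact hxY⟩, hxB⟩
      · rintro ⟨⟨_, hfxY⟩, hxB⟩
        rw [hfix x hxB] at hfxY
        exact ⟨hfxY, hxB⟩
    have hY₀ss : Y₀ ⊂ C₀ := by
      refine Finset.ssubset_iff_subset_ne.mpr ⟨hY₀C, fun hcon => hYne ?_⟩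
      rw [← himgY, hcon, himg]
    have := hmp.2 Y₀ hY₀ss
    rw [hδY, hYB]
    exact this

theorem stmt13 {L V : Type} [Fintype L] [DecidableEq V] (α : L → ℝ)
    (hα : ∀ E, 0 < α E ∧ α E ≤ 1) (ar : L → ℕ) (har : ∀ E, 2 ≤ ar E)
    (rel : L → Finset V → Prop) (hedge : ∀ E e, rel E e → e.card = ar E)
    (A B C₀ : Finset V) (hAK : inK α rel A) (hBK : inK α rel B)
    (hCK : inK α rel C₀)
    (hAB : strong α rel A B) (hmp : essMinPair α rel B C₀)
    (γ : ℝ) (hγ : γ = -(delta α rel C₀ - delta α rel B))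
    (k : ℕ) (hk : (k : ℝ) * γ ≤ delta α rel B - delta α rel A)
    (hk' : delta α rel B - delta α rel A < ((k : ℝ) + 1) * γ)
    (C : Fin k → Finset V)
    (hcopy : ∀ i, copyOver rel B C₀ (C i))
    (hdisj : ∀ i j, i ≠ j → C i ∩ C j = B)
    (D : Finset V) (hD : D = B ∪ Finset.univ.biUnion C)
    (hfree : ∀ E (e : Finset V), rel E e → e ⊆ D → (e ⊆ B ∨ ∃ i, e ⊆ C i)) :
    inK α rel D ∧ strong α rel A D ∧
      0 ≤ delta α rel D - delta α rel A ∧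
      delta α rel D - delta α rel A < γ ∧
      ∀ G : Finset V, minPair α rel B G → G.card < C₀.card →
        ¬ embedsOver rel B G D := by
  classical
  obtain ⟨hABsub, hABstr⟩ := hAB
  have hδA : 0 ≤ delta α rel A := hAK A le_rfl
  have hδC : delta α rel C₀ < delta α rel B := minPair_lt α rel B C₀ hmp.1
  have hγpos : 0 < γ := by rw [hγ]; linarith
  have hcf : ∀ i, B ⊆ C i ∧ (C i).card = C₀.card ∧ delta α rel (C i) = delta α rel C₀ ∧
      ∀ Y : Finset V, Y ⊆ C i → Y ≠ C i → 0 ≤ delta α rel Y - delta α rel (Y ∩ B) :=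
    fun i => copy_facts α rel B C₀ (C i) hmp (hcopy i)
  have hBD : B ⊆ D := by rw [hD]; exact Finset.subset_union_left
  have hCD : ∀ i, C i ⊆ D := by
    intro i; rw [hD]
    exact (Finset.subset_biUnion_of_mem C (Finset.mem_univ i)).trans Finset.subset_union_right
  have hdec : ∀ X : Finset V, X ⊆ D → delta α rel X = delta α rel (X ∩ B) +
      ∑ i, (delta α rel (X ∩ C i) - delta α rel (X ∩ B)) := by
    intro X hX
    refine delta_decomp α rel B C (fun i => (hcf i).1) hdisj X ?_
      (fun E e he hsub => hfree E e he (hsub.trans hX))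
    rw [← hD]; exact hX
  have hterm0 : ∀ (X : Finset V) i, ¬ C i ⊆ X →
      0 ≤ delta α rel (X ∩ C i) - delta α rel (X ∩ B) := by
    intro X i hnsub
    have hne : X ∩ C i ≠ C i := fun hcon =>
      hnsub (by rw [← hcon]; exact Finset.inter_subset_left)
    have h := (hcf i).2.2.2 (X ∩ C i) Finset.inter_subset_right hne
    rwa [Finset.inter_assoc, (Finset.inter_eq_right.mpr (hcf i).1 : C i ∩ B = B)] at h
  have hbound : ∀ X : Finset V, X ⊆ D →
      delta α rel (X ∩ B) ≤ delta α rel X ∨ delta α rel B - k * γ ≤ delta α rel X := by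
    intro X hX
    rw [hdec X hX]
    by_cases h : ∃ i, C i ⊆ X
    · right
      obtain ⟨i₀, hi₀⟩ := h
      have hBX : B ⊆ X := ((hcf i₀).1).trans hi₀
      have hXB : X ∩ B = B := Finset.inter_eq_right.mpr hBX
      have hterm : ∀ i, -γ ≤ delta α rel (X ∩ C i) - delta α rel (X ∩ B) := by
        intro i
        by_cases hci : C i ⊆ X
        · have hxc : X ∩ C i = C i := Finset.inter_eq_right.mpr hci
          rw [hxc, hXB, (hcf i).2.2.1, hγ]
          linarith
        · linarith [hterm0 X i hci]
      have hsum : (k : ℝ) * (-γ) ≤ ∑ i, (delta α rel (X ∩ C i) - delta α rel (X ∩ B)) := by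
        calc (k : ℝ) * (-γ) = ∑ _i : Fin k, (-γ) := by
              rw [Finset.sum_const, Finset.card_univ, Fintype.card_fin, nsmul_eq_mul]
          _ ≤ _ := Finset.sum_le_sum fun i _ => hterm i
      rw [hXB]
      rw [hXB] at hsum
      linarith
    · left
      push_neg at h
      have hsum : 0 ≤ ∑ i, (delta α rel (X ∩ C i) - delta α rel (X ∩ B)) :=
        Finset.sum_nonneg fun i _ => hterm0 X i (h i)
      linarith
  have hδD : delta α rel D = delta α rel B - k * γ := by
    rw [hdec D le_rfl, Finset.inter_eq_right.mpr hBD]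
    have hterm : ∀ i : Fin k, delta α rel (D ∩ C i) - delta α rel B = -γ := by
      intro i
      rw [Finset.inter_eq_right.mpr (hCD i), (hcf i).2.2.1, hγ]; ring
    rw [Finset.sum_congr rfl fun i _ => hterm i, Finset.sum_const, Finset.card_univ,
      Fintype.card_fin, nsmul_eq_mul]
    ring
  refine ⟨?_, ⟨hABsub.trans hBD, ?_⟩, ?_, ?_, ?_⟩
  · intro X hX
    rcases hbound X hX with h | h
    · exact le_trans (hBK (X ∩ B) Finset.inter_subset_right) h
    · linarith
  · intro X hAX hXD
    rcases hbound X hXD with h | h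
    · exact le_trans (hABstr (X ∩ B) (Finset.subset_inter hAX hABsub)
        Finset.inter_subset_right) h
    · linarith
  · rw [hδD]; linarith
  · rw [hδD]; linarith
  · rintro G hmpG hGcard ⟨f, hinj, hfix, himg, hrelf⟩
    have hBG : B ⊆ G := hmpG.1
    have hδG : delta α rel G < delta α rel B := minPair_lt α rel B G hmpG
    have hδG' : delta α rel (G.image f) = delta α rel G :=
      delta_image α rel f G G hinj hrelf le_rfl
    have hBG' : B ⊆ G.image f := by
      intro b hb
      rw [← hfix b hb]
      exact Finset.mem_image_of_mem f (hBG hb)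
    have hBeq : G.image f ∩ B = B := Finset.inter_eq_right.mpr hBG'
    have hterms : ∀ i : Fin k, 0 ≤ delta α rel ((G.image f) ∩ C i) - delta α rel B := by
      intro i
      have hnc : ¬ C i ⊆ G.image f := by
        intro hcon
        have h1 : (C i).card ≤ (G.image f).card := Finset.card_le_card hcon
        have h2 : (G.image f).card ≤ G.card := Finset.card_image_le
        rw [(hcf i).2.1] at h1
        omega
      have h := hterm0 (G.image f) i hnc
      rwa [hBeq] at h
    have hdecG := hdec (G.image f) himg
    rw [hBeq] at hdecG
    have hsum : 0 ≤ ∑ i, (delta α rel ((G.image f) ∩ C i) - delta α rel B) :=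
      Finset.sum_nonneg fun i _ => hterms i
    linarith
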